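/- Let λ > 0 and fix integers i < j. Define Ωᵢⱼ⁽ⁿ⁾ = e^{-(j-i)λ}·√( (1 - e^{-2(n+1-j)λ})·(1 - e^{-2(n+1+i)λ}) / ((1 - e^{-2(n+1-i)λ})·(1 - e^{-2(n+1+j)λ})) ). Then Ωᵢⱼ⁽ⁿ⁾·e^{(j-i)λ} - 1 = -(sinh(2jλ) - sinh(2iλ))·e^{-2(n+1)λ} + o(e^{-2(n+1)λ}) as n → ∞. -/

import Mathlib

theorem omega_relative_error (l : ℝ) (hl : 0 < l) (i j : ℤ) (hij : i < j) :
    (fun n : ℕ =>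
        Real.exp (-((j : ℝ) - i) * l) *
            Real.sqrt ((1 - Real.exp (-2 * ((n : ℝ) + 1 - j) * l)) *
                (1 - Real.exp (-2 * ((n : ℝ) + 1 + i) * l)) /
              ((1 - Real.exp (-2 * ((n : ℝ) + 1 - i) * l)) *
                (1 - Real.exp (-2 * ((n : ℝ) + 1 + j) * l)))) *
            Real.exp (((j : ℝ) - i) * l) - 1 -
          (-(Real.sinh (2 * (j : ℝ) * l) - Real.sinh (2 * (i : ℝ) * l)) *
            Real.exp (-2 * ((n : ℝ) + 1) * l)))
      =o[Filter.atTop] (fun n : ℕ => Real.exp (-2 * ((n : ℝ) + 1) * l)) := by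
  set a : ℝ := Real.exp (2 * (j : ℝ) * l) with ha
  set b : ℝ := Real.exp (-(2 * (i : ℝ) * l)) with hb
  set c : ℝ := Real.exp (2 * (i : ℝ) * l) with hc
  set d : ℝ := Real.exp (-(2 * (j : ℝ) * l)) with hd
  set s : ℝ := Real.sinh (2 * (j : ℝ) * l) - Real.sinh (2 * (i : ℝ) * l) with hs
  set F : ℝ → ℝ := fun x =>
    Real.exp (-((j : ℝ) - i) * l) *
      Real.sqrt ((1 - x * a) * (1 - x * b) / ((1 - x * c) * (1 - x * d))) *
      Real.exp (((j : ℝ) - i) * l) - 1 + s * x with hF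
  -- linear pieces
  have hlin : ∀ A : ℝ, HasDerivAt (fun x : ℝ => 1 - x * A) (-A) 0 := fun A => by
    simpa using ((hasDerivAt_id (0 : ℝ)).mul_const A).const_sub 1
  have hN := (hlin a).mul (hlin b)
  have hD := (hlin c).mul (hlin d)
  have hDne : (1 - (0:ℝ) * c) * (1 - (0:ℝ) * d) ≠ 0 := by norm_num
  have hQ := hN.div hD hDne
  have hQne : (1 - (0:ℝ) * a) * (1 - (0:ℝ) * b) / ((1 - (0:ℝ) * c) * (1 - (0:ℝ) * d)) ≠ 0 := by
    norm_num
  have hsqrt := hQ.sqrt hQne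
  have hS : HasDerivAt (fun x : ℝ => s * x) s 0 := by
    simpa using (hasDerivAt_id (0 : ℝ)).const_mul s
  have hFd := (((hsqrt.const_mul (Real.exp (-((j : ℝ) - i) * l))).mul_const
      (Real.exp (((j : ℝ) - i) * l))).sub_const 1).add hS
  have hderiv : HasDerivAt F 0 0 := by
    convert hFd using 1
    · rfl
    · rfl
    · rfl
    have he : Real.exp (-((j : ℝ) - i) * l) * Real.exp (((j : ℝ) - i) * l) = 1 := by
      rw [← Real.exp_add]; ring_nf; exact Real.exp_zero
    have hsinh : s = (a - d) / 2 - (c - b) / 2 := by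
      rw [hs, Real.sinh_eq, Real.sinh_eq, ha, hb, hc, hd]
    simp only [Pi.mul_apply, Pi.div_apply, zero_mul, mul_zero, sub_zero, mul_one, one_mul, div_one, Real.sqrt_one]
    rw [hsinh]
    linear_combination ((a + b - c - d) / 2) * he
  have hF0 : F 0 = 0 := by
    simp only [hF, zero_mul, mul_zero, sub_zero, mul_one, one_mul, div_one, Real.sqrt_one]
    rw [← Real.exp_add]; ring_nf; simp
  have hlo : F =o[nhds 0] (fun x : ℝ => x) := by
    have h := hderiv.isLittleO
    simpa [hF0] using h
  have htend : Filter.Tendsto (fun n : ℕ => Real.exp (-2 * ((n : ℝ) + 1) * l))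
      Filter.atTop (nhds 0) := by
    have h1 : Filter.Tendsto (fun n : ℕ => ((n : ℝ) + 1)) Filter.atTop Filter.atTop :=
      Filter.tendsto_atTop_add_const_right _ 1 tendsto_natCast_atTop_atTop
    have h2 : Filter.Tendsto (fun n : ℕ => -2 * ((n : ℝ) + 1) * l) Filter.atTop Filter.atBot := by
      have h3 := h1.atTop_mul_const (by linarith : (0:ℝ) < 2 * l)
      have h4 : Filter.Tendsto (fun n : ℕ => -(((n : ℝ) + 1) * (2 * l)))
          Filter.atTop Filter.atBot := Filter.tendsto_neg_atBot_iff.mpr h3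
      exact h4.congr (fun n => by ring)
    exact (Real.tendsto_exp_atBot.comp h2)
  have hcomp := hlo.comp_tendsto htend
  refine hcomp.congr' (Filter.Eventually.of_forall fun n => ?_)
    (Filter.Eventually.of_forall fun n => rfl)
  simp only [Function.comp, hF, ha, hb, hc, hd, ← Real.exp_add]
  ring_nf
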